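/- Let K be a field with char K ≠ 2 in which −1 is a square, and let q be an anisotropic quadratic form on K³, i.e. q(v) = 0 implies v = 0. Then there exist c, λ, μ ∈ Kˣ with λ and μ not squares in K, such that q is equivalent (isometric) to the quadratic form (x,y,z) ↦ c·(λx² + y² − μz²) on K³. -/

import Mathlib

/-- over a field `K` of char ≠ 2 in which `−1` is a square, every anisotropic
quadratic form on `K³` is equivalent to `c·(λx² + y² − μz²)` with `λ, μ` nonsquares. -/
theorem stmt_3 (K : Type*) [Field K] (hchar : ringChar K ≠ 2)
    (hneg : ∃ i : K, i ^ 2 = -1)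
    (q : QuadraticForm K (Fin 3 → K))
    (haniso : ∀ v : Fin 3 → K, q v = 0 → v = 0) :
    ∃ (c l μ : Kˣ), (¬ ∃ r : K, r ^ 2 = (l : K)) ∧ (¬ ∃ r : K, r ^ 2 = (μ : K)) ∧
      ∃ e : (Fin 3 → K) ≃ₗ[K] (Fin 3 → K),
        ∀ v : Fin 3 → K,
          q (e v) = (c : K) * ((l : K) * v 0 ^ 2 + v 1 ^ 2 - (μ : K) * v 2 ^ 2) := by
  have h2 : (2 : K) ≠ 0 := Ring.two_ne_zero hchar
  haveI : Invertible (2 : K) := invertibleOfNonzero h2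
  obtain ⟨w, ⟨f⟩⟩ := q.equivalent_weightedSumSquares
  have hfin : Module.finrank K (Fin 3 → K) = 3 := by simp
  -- reindexing equivalence
  let σ : Fin 3 ≃ Fin (Module.finrank K (Fin 3 → K)) := finCongr hfin.symm
  let g : (Fin (Module.finrank K (Fin 3 → K)) → K) ≃ₗ[K] (Fin 3 → K) :=
    LinearEquiv.funCongrLeft K K σ
  let e : (Fin 3 → K) ≃ₗ[K] (Fin 3 → K) := g.symm.trans f.toLinearEquiv.symm
  set a : K := w (σ 0) with ha
  set b : K := w (σ 1) with hb
  set cc : K := w (σ 2) with hcc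
  have key : ∀ v : Fin 3 → K,
      q (e v) = a * v 0 ^ 2 + b * v 1 ^ 2 + cc * v 2 ^ 2 := by
    intro v
    have h1 : q (e v) = QuadraticMap.weightedSumSquares K w (g.symm v) := by
      have h2' := (f.map_app (f.toLinearEquiv.symm (g.symm v))).symm
      rw [show (f (f.toLinearEquiv.symm (g.symm v)) : _) =
        f.toLinearEquiv (f.toLinearEquiv.symm (g.symm v)) from rfl,
        f.toLinearEquiv.apply_symm_apply] at h2'
      exact h2'
    rw [h1, QuadraticMap.weightedSumSquares_apply]
    have hg : ∀ j, (g.symm v) j = v (σ.symm j) := fun j => rfl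
    rw [← Equiv.sum_comp σ (fun j => w j • ((g.symm v) j * (g.symm v) j))]
    simp only [hg, Equiv.symm_apply_apply, smul_eq_mul]
    rw [Fin.sum_univ_three]
    ring
  -- anisotropy in new coordinates
  have aniso' : ∀ v : Fin 3 → K,
      a * v 0 ^ 2 + b * v 1 ^ 2 + cc * v 2 ^ 2 = 0 → v = 0 := by
    intro v hv
    have : q (e v) = 0 := by rw [key v, hv]
    have := haniso _ this
    have h0 : e v = e 0 := by simpa using this
    exact e.injective h0
  have hvne : ∀ (v : Fin 3 → K) (i : Fin 3), v i ≠ 0 → v ≠ 0 := by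
    intro v i hvi h; exact hvi (by rw [h]; rfl)
  have hane : a ≠ 0 := by
    intro h
    have := aniso' ![1, 0, 0] (by simp [h])
    exact hvne ![1, 0, 0] 0 (by norm_num) this
  have hbne : b ≠ 0 := by
    intro h
    have := aniso' ![0, 1, 0] (by simp [h])
    exact hvne ![0, 1, 0] 1 (by norm_num) this
  have hccne : cc ≠ 0 := by
    intro h
    have := aniso' ![0, 0, 1] (by simp [h])
    exact hvne ![0, 0, 1] 2 (by exact one_ne_zero) this
  obtain ⟨i, hi⟩ := hneg
  refine ⟨Units.mk0 b hbne, Units.mk0 (a / b) (div_ne_zero hane hbne),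
    Units.mk0 (-(cc / b)) (neg_ne_zero.mpr (div_ne_zero hccne hbne)), ?_, ?_, e, ?_⟩
  · rintro ⟨r, hr⟩
    simp only [Units.val_mk0] at hr
    have ha' : a = b * r ^ 2 := by field_simp at hr; linear_combination -hr
    have := aniso' ![1, i * r, 0] (by
      simp only [Matrix.cons_val_zero, Matrix.cons_val_one, Matrix.head_cons,
        Matrix.cons_val_two, Matrix.tail_cons]
      have hir : (i * r) ^ 2 = -(r ^ 2) := by rw [mul_pow, hi]; ring
      rw [hir, ha']
      ring)
    exact hvne ![1, i * r, 0] 0 (by norm_num) this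
  · rintro ⟨r, hr⟩
    simp only [Units.val_mk0] at hr
    have hcc' : cc = -(b * r ^ 2) := by field_simp at hr; linear_combination hr
    have := aniso' ![0, r, 1] (by
      simp only [Matrix.cons_val_zero, Matrix.cons_val_one, Matrix.head_cons,
        Matrix.cons_val_two, Matrix.tail_cons]
      rw [hcc']
      ring)
    exact hvne ![0, r, 1] 2 (by exact one_ne_zero) this
  · intro v
    rw [key v]
    simp only [Units.val_mk0]
    field_simp
    ring
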